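/- Let 1 ≤ α < 2, set ν = (α-1)/(2-α) and κ = (2-α)/2, and let j > 0 satisfy J_ν(j) = 0, where J_ν is the Bessel function of the first kind of order ν. Define Φ : [-1,1] → ℝ by Φ(x) = x^{(1-α)/2} J_ν(j x^{κ}) for x ∈ (0,1] and Φ(x) = 0 for x ∈ [-1,0]. Then: (i) Φ ∈ L²(-1,1) and Φ is locally absolutely continuous on (0,1] and on [-1,0); (ii) Φ(-1) = Φ(1) = 0; (iii) ∫_{-1}^1 |x|^α Φ'(x)² dx < ∞; (iv) the function equal to x^α Φ'(x) on (0,1), and to 0 on (-1,0], extends to an absolutely continuous function G on [-1,1] with G' ∈ L²(-1,1) (in particular x^α Φ'(x) → 0 as x → 0⁺); and (v) -G'(x) = κ² j² Φ(x) for a.e. x ∈ (-1,1). In other words, Φ belongs to H²_α(-1,1) and is an eigenfunction of -( |x|^α u')' with Dirichlet boundary conditions, with eigenvalue κ² j². -/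

import Mathlib

open MeasureTheory Set Filter

/-- The Bessel function of the first kind of (real) order `ν`, defined by its
ascending power series `J_ν(y) = Σ_{m≥0} (-1)^m / (m! Γ(m+ν+1)) (y/2)^{2m+ν}`
(the same formula also defines `J_{-ν}` for non-integer `ν`). -/
noncomputable def besselJ (ν : ℝ) (y : ℝ) : ℝ :=
  ∑' m : ℕ, ((-1 : ℝ) ^ m / (m.factorial * Real.Gamma ((m : ℝ) + ν + 1))) *
    (y / 2) ^ (2 * (m : ℝ) + ν)

/-- `u` is absolutely continuous on `[c,d]` with (a.e.) derivative `u'`,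
encoded via the fundamental theorem of calculus. -/
def AbsContOnWith (u u' : ℝ → ℝ) (c d : ℝ) : Prop :=
  IntervalIntegrable u' volume c d ∧
    ∀ x ∈ Icc c d, u x = u c + ∫ t in c..x, u' t

/-- Membership in the strongly degenerate weighted Sobolev space `H¹_α(-1,1)`
(for `α ∈ [1,2)`), with explicit derivative witness `u'`. -/
def MemH1Strong (α : ℝ) (u u' : ℝ → ℝ) : Prop :=
  IntegrableOn (fun x => (u x) ^ 2) (Ioo (-1 : ℝ) 1) volume ∧
  (∀ c : ℝ, 0 < c → c ≤ 1 → AbsContOnWith u u' c 1) ∧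
  (∀ c : ℝ, -1 ≤ c → c < 0 → AbsContOnWith u u' (-1) c) ∧
  u (-1) = 0 ∧ u 1 = 0 ∧
  IntegrableOn (fun x => |x| ^ α * (u' x) ^ 2) (Ioo (-1 : ℝ) 1) volume

/-! ### Auxiliary power series development -/

/-- Coefficients of the power series `Σ aC m · t^m` representing
`x^{(1-α)/2} J_ν(j x^κ)` in the variable `t = x^{2-α}`. -/
noncomputable def aC (ν j : ℝ) (m : ℕ) : ℝ :=
  ((-1 : ℝ) ^ m / (m.factorial * Real.Gamma ((m : ℝ) + ν + 1))) *
    ((j / 2) ^ (2 * (m : ℝ) + ν))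

noncomputable def fB (ν j u : ℝ) : ℝ := ∑' m : ℕ, aC ν j m * u ^ m
noncomputable def f1B (ν j u : ℝ) : ℝ := ∑' m : ℕ, aC ν j m * ((m : ℝ) * u ^ (m - 1))
noncomputable def f2B (ν j u : ℝ) : ℝ :=
  ∑' m : ℕ, aC ν j m * ((m : ℝ) * (((m - 1 : ℕ) : ℝ) * u ^ (m - 2)))

lemma aC_succ {ν j : ℝ} (hν0 : 0 ≤ ν) (hj : 0 < j) (m : ℕ) :
    aC ν j (m + 1) = -((j / 2) ^ 2 / (((m : ℝ) + 1) * ((m : ℝ) + 1 + ν))) * aC ν j m := by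
  have hΓpos : 0 < Real.Gamma ((m : ℝ) + ν + 1) :=
    Real.Gamma_pos_of_pos (by positivity)
  have hfact : ((m.factorial : ℝ)) ≠ 0 := by exact_mod_cast m.factorial_ne_zero
  have hΓ : Real.Gamma (((m : ℝ) + 1) + ν + 1)
      = ((m : ℝ) + ν + 1) * Real.Gamma ((m : ℝ) + ν + 1) := by
    rw [show ((m : ℝ) + 1) + ν + 1 = ((m : ℝ) + ν + 1) + 1 by ring,
      Real.Gamma_add_one (by positivity)]
  have hrpow : (j / 2) ^ (2 * ((m : ℝ) + 1) + ν)
      = (j / 2) ^ (2 * (m : ℝ) + ν) * (j / 2) ^ (2 : ℕ) := by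
    rw [show 2 * ((m : ℝ) + 1) + ν = (2 * (m : ℝ) + ν) + ((2 : ℕ) : ℝ) by push_cast; ring,
      Real.rpow_add (by positivity : (0 : ℝ) < j / 2), Real.rpow_natCast]
  unfold aC
  push_cast
  rw [hΓ, hrpow]
  rw [Nat.factorial_succ]
  push_cast
  have h1 : ((m : ℝ) + 1) ≠ 0 := by positivity
  have h2 : ((m : ℝ) + 1 + ν) ≠ 0 := by positivity
  have h3 : Real.Gamma ((m : ℝ) + ν + 1) ≠ 0 := ne_of_gt hΓpos
  field_simp
  ring

lemma abs_aC_succ_le {ν j : ℝ} (hν0 : 0 ≤ ν) (hj : 0 < j) (m : ℕ) :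
    |aC ν j (m + 1)| ≤ (j / 2) ^ 2 / ((m : ℝ) + 1) ^ 2 * |aC ν j m| := by
  rw [aC_succ hν0 hj m, abs_mul, abs_neg, abs_div]
  have h1 : |(j / 2 : ℝ) ^ 2| = (j / 2) ^ 2 := abs_of_nonneg (by positivity)
  have h2 : |(((m : ℝ) + 1) * ((m : ℝ) + 1 + ν))| = ((m : ℝ) + 1) * ((m : ℝ) + 1 + ν) :=
    abs_of_nonneg (by positivity)
  rw [h1, h2]
  have hle : ((m : ℝ) + 1) ^ 2 ≤ ((m : ℝ) + 1) * ((m : ℝ) + 1 + ν) := by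
    nlinarith [Nat.cast_nonneg (α := ℝ) m]
  exact mul_le_mul_of_nonneg_right
    (div_le_div_of_nonneg_left (by positivity) (by positivity) hle) (abs_nonneg _)

lemma summable_master {ν j : ℝ} (hν0 : 0 ≤ ν) (hj : 0 < j) {R : ℝ} (hR : 0 ≤ R) :
    Summable (fun m : ℕ => |aC ν j m| * ((m : ℝ) + 1) ^ 2 * R ^ m) := by
  set q : ℝ := (j / 2) ^ 2 with hq
  have hq0 : 0 ≤ q := by positivity
  apply summable_of_ratio_norm_eventually_le (r := 1 / 2) (by norm_num)
  filter_upwards [eventually_ge_atTop ⌈8 * q * R⌉₊] with m hm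
  have hm' : 8 * q * R ≤ (m : ℝ) := le_trans (Nat.le_ceil _) (by exact_mod_cast hm)
  have hB := abs_aC_succ_le hν0 hj m
  have hA : (0 : ℝ) ≤ |aC ν j m| := abs_nonneg _
  have hRm : (0 : ℝ) ≤ R ^ m := by positivity
  have hnn : ∀ k : ℕ, 0 ≤ |aC ν j k| * ((k : ℝ) + 1) ^ 2 * R ^ k := fun k =>
    mul_nonneg (mul_nonneg (abs_nonneg _) (by positivity)) (pow_nonneg hR k)
  rw [Real.norm_of_nonneg (hnn _), Real.norm_of_nonneg (hnn _)]
  push_cast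
  have key : q / ((m : ℝ) + 1) ^ 2 * (((m : ℝ) + 1) + 1) ^ 2 * R ≤ 1 / 2 * ((m : ℝ) + 1) ^ 2 := by
    rw [div_mul_eq_mul_div, div_mul_eq_mul_div, div_le_iff₀ (by positivity)]
    have hm0 : (0 : ℝ) ≤ (m : ℝ) := Nat.cast_nonneg m
    have h4 : (((m : ℝ) + 1) + 1) ^ 2 ≤ 4 * ((m : ℝ) + 1) ^ 2 := by nlinarith
    have hqR : 0 ≤ q * R := mul_nonneg hq0 hR
    nlinarith [mul_le_mul_of_nonneg_right h4 hqR, sq_nonneg ((m : ℝ) + 1),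
      mul_le_mul_of_nonneg_left hm' (sq_nonneg ((m : ℝ) + 1))]
  calc |aC ν j (m + 1)| * (((m : ℝ) + 1) + 1) ^ 2 * R ^ (m + 1)
      ≤ (q / ((m : ℝ) + 1) ^ 2 * |aC ν j m|) * (((m : ℝ) + 1) + 1) ^ 2 * R ^ (m + 1) := by
        gcongr
    _ = |aC ν j m| * R ^ m * (q / ((m : ℝ) + 1) ^ 2 * (((m : ℝ) + 1) + 1) ^ 2 * R) := by
        rw [pow_succ]; ring
    _ ≤ |aC ν j m| * R ^ m * (1 / 2 * ((m : ℝ) + 1) ^ 2) :=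
        mul_le_mul_of_nonneg_left key (by positivity)
    _ = 1 / 2 * (|aC ν j m| * ((m : ℝ) + 1) ^ 2 * R ^ m) := by ring

section bounds
variable {ν j : ℝ}

lemma abs_pow_le {y M : ℝ} (h : |y| ≤ M) (hM : 1 ≤ M) {k m : ℕ} (hk : k ≤ m) :
    |y| ^ k ≤ M ^ m :=
  le_trans (pow_le_pow_left₀ (abs_nonneg y) h k) (pow_le_pow_right₀ hM hk)

lemma bound0 {y M : ℝ} (h : |y| ≤ M) (hM : 1 ≤ M) (m : ℕ) :
    ‖aC ν j m * y ^ m‖ ≤ |aC ν j m| * ((m : ℝ) + 1) ^ 2 * M ^ m := by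
  rw [Real.norm_eq_abs, abs_mul, abs_pow]
  calc |aC ν j m| * |y| ^ m ≤ |aC ν j m| * M ^ m :=
        mul_le_mul_of_nonneg_left (abs_pow_le h hM le_rfl) (abs_nonneg _)
    _ ≤ |aC ν j m| * ((m : ℝ) + 1) ^ 2 * M ^ m := by
        rw [mul_assoc]
        refine mul_le_mul_of_nonneg_left ?_ (abs_nonneg _)
        have hMm : (0:ℝ) ≤ M ^ m := by positivity
        have h1 : (1:ℝ) ≤ ((m : ℝ) + 1) ^ 2 := by nlinarith [Nat.cast_nonneg (α := ℝ) m]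
        nlinarith [mul_le_mul_of_nonneg_right h1 hMm]

lemma bound1 {y M : ℝ} (h : |y| ≤ M) (hM : 1 ≤ M) (m : ℕ) :
    ‖aC ν j m * ((m : ℝ) * y ^ (m - 1))‖ ≤ |aC ν j m| * ((m : ℝ) + 1) ^ 2 * M ^ m := by
  rw [Real.norm_eq_abs, abs_mul, abs_mul, Nat.abs_cast, abs_pow]
  have h1 : |y| ^ (m - 1) ≤ M ^ m := abs_pow_le h hM (Nat.sub_le m 1)
  have h2 : (m : ℝ) * |y| ^ (m - 1) ≤ ((m : ℝ) + 1) ^ 2 * M ^ m := by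
    have hy : (0:ℝ) ≤ |y| ^ (m - 1) := by positivity
    have hm0 : (0:ℝ) ≤ (m:ℝ) := Nat.cast_nonneg m
    have hMm : (0:ℝ) ≤ M ^ m := le_trans hy h1
    have hle : (m:ℝ) ≤ ((m : ℝ) + 1) ^ 2 := by nlinarith
    calc (m : ℝ) * |y| ^ (m - 1) ≤ (m : ℝ) * M ^ m := mul_le_mul_of_nonneg_left h1 hm0
      _ ≤ ((m : ℝ) + 1) ^ 2 * M ^ m := mul_le_mul_of_nonneg_right hle hMm
  calc |aC ν j m| * ((m : ℝ) * |y| ^ (m - 1))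
      ≤ |aC ν j m| * (((m : ℝ) + 1) ^ 2 * M ^ m) := mul_le_mul_of_nonneg_left h2 (abs_nonneg _)
    _ = |aC ν j m| * ((m : ℝ) + 1) ^ 2 * M ^ m := by ring

lemma bound2 {y M : ℝ} (h : |y| ≤ M) (hM : 1 ≤ M) (m : ℕ) :
    ‖aC ν j m * ((m : ℝ) * (((m - 1 : ℕ) : ℝ) * y ^ (m - 2)))‖
      ≤ |aC ν j m| * ((m : ℝ) + 1) ^ 2 * M ^ m := by
  rw [Real.norm_eq_abs, abs_mul, abs_mul, abs_mul, Nat.abs_cast, Nat.abs_cast, abs_pow]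
  have h1 : |y| ^ (m - 2) ≤ M ^ m := abs_pow_le h hM (Nat.sub_le m 2)
  have hm1 : ((m - 1 : ℕ) : ℝ) ≤ (m : ℝ) := by exact_mod_cast Nat.sub_le m 1
  have h2 : (m : ℝ) * (((m - 1 : ℕ) : ℝ) * |y| ^ (m - 2)) ≤ ((m : ℝ) + 1) ^ 2 * M ^ m := by
    have hy : (0:ℝ) ≤ |y| ^ (m - 2) := by positivity
    have hm0 : (0:ℝ) ≤ (m:ℝ) := Nat.cast_nonneg m
    have hm10 : (0:ℝ) ≤ ((m - 1 : ℕ) : ℝ) := Nat.cast_nonneg _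
    have step : ((m - 1 : ℕ) : ℝ) * |y| ^ (m - 2) ≤ (m : ℝ) * M ^ m := by
      calc ((m - 1 : ℕ) : ℝ) * |y| ^ (m - 2) ≤ (m : ℝ) * |y| ^ (m - 2) :=
            mul_le_mul_of_nonneg_right hm1 hy
        _ ≤ (m : ℝ) * M ^ m := mul_le_mul_of_nonneg_left h1 hm0
    have hMm : (0:ℝ) ≤ M ^ m := by positivity
    have hle : (m:ℝ) * (m:ℝ) ≤ ((m : ℝ) + 1) ^ 2 := by nlinarith
    calc (m : ℝ) * (((m - 1 : ℕ) : ℝ) * |y| ^ (m - 2)) ≤ (m : ℝ) * ((m : ℝ) * M ^ m) :=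
          mul_le_mul_of_nonneg_left step hm0
      _ = (m : ℝ) * (m : ℝ) * M ^ m := by ring
      _ ≤ ((m : ℝ) + 1) ^ 2 * M ^ m := mul_le_mul_of_nonneg_right hle hMm
  calc |aC ν j m| * ((m : ℝ) * (((m - 1 : ℕ) : ℝ) * |y| ^ (m - 2)))
      ≤ |aC ν j m| * (((m : ℝ) + 1) ^ 2 * M ^ m) := mul_le_mul_of_nonneg_left h2 (abs_nonneg _)
    _ = |aC ν j m| * ((m : ℝ) + 1) ^ 2 * M ^ m := by ring

lemma summable_terms0 (hν0 : 0 ≤ ν) (hj : 0 < j) (u : ℝ) :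
    Summable (fun m : ℕ => aC ν j m * u ^ m) :=
  Summable.of_norm_bounded (summable_master hν0 hj (R := |u| + 1) (by positivity))
    (fun m => bound0 (by linarith [abs_nonneg u]) (by linarith [abs_nonneg u]) m)

lemma summable_terms1 (hν0 : 0 ≤ ν) (hj : 0 < j) (u : ℝ) :
    Summable (fun m : ℕ => aC ν j m * ((m : ℝ) * u ^ (m - 1))) :=
  Summable.of_norm_bounded (summable_master hν0 hj (R := |u| + 1) (by positivity))
    (fun m => bound1 (by linarith [abs_nonneg u]) (by linarith [abs_nonneg u]) m)

lemma summable_terms2 (hν0 : 0 ≤ ν) (hj : 0 < j) (u : ℝ) :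
    Summable (fun m : ℕ => aC ν j m * ((m : ℝ) * (((m - 1 : ℕ) : ℝ) * u ^ (m - 2)))) :=
  Summable.of_norm_bounded (summable_master hν0 hj (R := |u| + 1) (by positivity))
    (fun m => bound2 (by linarith [abs_nonneg u]) (by linarith [abs_nonneg u]) m)

lemma hasDerivAt_fB (hν0 : 0 ≤ ν) (hj : 0 < j) (u : ℝ) :
    HasDerivAt (fB ν j) (f1B ν j u) u := by
  set M : ℝ := |u| + 1 with hM
  have hM1 : 1 ≤ M := by rw [hM]; linarith [abs_nonneg u]
  have huM : u ∈ Ioo (-M) M := by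
    constructor <;> [linarith [neg_abs_le u]; linarith [le_abs_self u]]
  exact hasDerivAt_tsum_of_isPreconnected
    (summable_master hν0 hj (R := M) (by positivity)) isOpen_Ioo isPreconnected_Ioo
    (fun m y _ => (hasDerivAt_pow m y).const_mul (aC ν j m))
    (fun m y hy => bound1 (le_of_lt (abs_lt.2 ⟨hy.1, hy.2⟩)) hM1 m)
    huM (summable_terms0 hν0 hj u) huM

lemma hasDerivAt_f1B (hν0 : 0 ≤ ν) (hj : 0 < j) (u : ℝ) :
    HasDerivAt (f1B ν j) (f2B ν j u) u := by
  set M : ℝ := |u| + 1 with hM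
  have hM1 : 1 ≤ M := by rw [hM]; linarith [abs_nonneg u]
  have huM : u ∈ Ioo (-M) M := by
    constructor <;> [linarith [neg_abs_le u]; linarith [le_abs_self u]]
  have hterm : ∀ (m : ℕ) (y : ℝ),
      HasDerivAt (fun z => aC ν j m * ((m : ℝ) * z ^ (m - 1)))
        (aC ν j m * ((m : ℝ) * (((m - 1 : ℕ) : ℝ) * y ^ (m - 2)))) y := by
    intro m y
    have h := (hasDerivAt_pow (m - 1) y).const_mul (aC ν j m * (m : ℝ))
    have hfun : (fun z : ℝ => aC ν j m * (m : ℝ) * z ^ (m - 1))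
        = fun z : ℝ => aC ν j m * ((m : ℝ) * z ^ (m - 1)) := by
      funext z; ring
    rw [hfun, Nat.sub_sub] at h
    refine h.congr_deriv ?_; rw [show m - (1 + 1) = m - 2 from rfl]; ring
  exact hasDerivAt_tsum_of_isPreconnected
    (summable_master hν0 hj (R := M) (by positivity)) isOpen_Ioo isPreconnected_Ioo
    (fun m y _ => hterm m y)
    (fun m y hy => bound2 (le_of_lt (abs_lt.2 ⟨hy.1, hy.2⟩)) hM1 m)
    huM (summable_terms1 hν0 hj u) huM

lemma continuous_fB (hν0 : 0 ≤ ν) (hj : 0 < j) : Continuous (fB ν j) :=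
  continuous_iff_continuousAt.2 fun u => (hasDerivAt_fB hν0 hj u).continuousAt

lemma continuous_f1B (hν0 : 0 ≤ ν) (hj : 0 < j) : Continuous (f1B ν j) :=
  continuous_iff_continuousAt.2 fun u => (hasDerivAt_f1B hν0 hj u).continuousAt

end bounds

lemma coefKey {α ν κ j : ℝ} (hα1 : 1 ≤ α) (hα2 : α < 2)
    (hν : ν = (α - 1) / (2 - α)) (hκ : κ = (2 - α) / 2) (hj : 0 < j) (k : ℕ) :
    (2 - α) * (((k : ℝ) + 1) * ((1 + (2 - α) * (k : ℝ)) * aC ν j (k + 1)))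
      = -(κ ^ 2 * j ^ 2) * aC ν j k := by
  have h2α : (0:ℝ) < 2 - α := by linarith
  have hν0 : 0 ≤ ν := by rw [hν]; apply div_nonneg <;> linarith
  rw [aC_succ hν0 hj k]
  have hk1 : ((k : ℝ) + 1) ≠ 0 := by positivity
  have hkν : ((k : ℝ) + 1 + ν) ≠ 0 := by positivity
  have hkey : (k : ℝ) + 1 + ν = ((2 - α) * (k : ℝ) + 1) / (2 - α) := by
    rw [hν]; field_simp; ring
  rw [hκ, hkey]
  have h1 : ((2 - α) * (k : ℝ) + 1) ≠ 0 := by positivity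
  field_simp
  ring

lemma keyODE {α ν κ j : ℝ} (hα1 : 1 ≤ α) (hα2 : α < 2)
    (hν : ν = (α - 1) / (2 - α)) (hκ : κ = (2 - α) / 2) (hj : 0 < j) (u : ℝ) :
    (2 - α) * (f1B ν j u + (2 - α) * (u * f2B ν j u)) = -(κ ^ 2 * j ^ 2) * fB ν j u := by
  have hν0 : 0 ≤ ν := by rw [hν]; apply div_nonneg <;> linarith
  have S0 := summable_terms0 (ν := ν) (j := j) hν0 hj u
  have S1 := summable_terms1 (ν := ν) (j := j) hν0 hj u
  have S2 := summable_terms2 (ν := ν) (j := j) hν0 hj u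
  have S2' : Summable (fun m : ℕ =>
      (2 - α) * (u * (aC ν j m * ((m : ℝ) * (((m - 1 : ℕ) : ℝ) * u ^ (m - 2)))))) :=
    (S2.mul_left u).mul_left (2 - α)
  have h1 : (2 - α) * (u * f2B ν j u)
      = ∑' m : ℕ, (2 - α) * (u * (aC ν j m * ((m : ℝ) * (((m - 1 : ℕ) : ℝ) * u ^ (m - 2))))) := by
    rw [f2B, ← tsum_mul_left, ← tsum_mul_left]
  have h2 : f1B ν j u + (2 - α) * (u * f2B ν j u)
      = ∑' m : ℕ, (aC ν j m * ((m : ℝ) * u ^ (m - 1))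
          + (2 - α) * (u * (aC ν j m * ((m : ℝ) * (((m - 1 : ℕ) : ℝ) * u ^ (m - 2)))))) := by
    rw [f1B, h1, Summable.tsum_add S1 S2']
  rw [h2, ← tsum_mul_left]
  set g : ℕ → ℝ := fun m => (2 - α) * (aC ν j m * ((m : ℝ) * u ^ (m - 1))
      + (2 - α) * (u * (aC ν j m * ((m : ℝ) * (((m - 1 : ℕ) : ℝ) * u ^ (m - 2)))))) with hg
  have Sg : Summable g := (S1.add S2').mul_left (2 - α)
  rw [Summable.tsum_eq_zero_add Sg]
  have hg0 : g 0 = 0 := by simp [hg]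
  rw [hg0, zero_add]
  have hRHS : -(κ ^ 2 * j ^ 2) * fB ν j u = ∑' k : ℕ, -(κ ^ 2 * j ^ 2) * (aC ν j k * u ^ k) := by
    rw [fB, ← tsum_mul_left]
  rw [hRHS]
  refine tsum_congr fun k => ?_
  have hck := coefKey hα1 hα2 hν hκ hj k
  have hsub1 : (k + 1) - 1 = k := rfl
  have hsub2 : (k + 1) - 2 = k - 1 := by omega
  have hpow : u * u ^ (k - 1) * (k : ℝ) = u ^ k * (k : ℝ) := by
    cases k with
    | zero => simp
    | succ k' => rw [Nat.succ_sub_one, pow_succ]; ring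
  rw [hg]
  simp only [hsub1, hsub2]
  push_cast
  linear_combination (u ^ k) * hck
    + (2 - α) ^ 2 * ((k : ℝ) + 1) * aC ν j (k + 1) * hpow

lemma besselJ_rep {α ν κ j : ℝ} (hα2 : α < 2)
    (hν : ν = (α - 1) / (2 - α)) (hκ : κ = (2 - α) / 2) (hj : 0 < j)
    {x : ℝ} (hx : 0 < x) :
    x ^ ((1 - α) / 2) * besselJ ν (j * x ^ κ) = fB ν j (x ^ (2 - α)) := by
  have h2α : (0:ℝ) < 2 - α := by linarith
  rw [besselJ, fB, ← tsum_mul_left]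
  refine tsum_congr fun m => ?_
  have hxκ : (0:ℝ) < x ^ κ := Real.rpow_pos_of_pos hx κ
  have hd : j * x ^ κ / 2 = (j / 2) * x ^ κ := by ring
  rw [hd, Real.mul_rpow (by positivity) hxκ.le]
  have h2 : (x ^ κ) ^ (2 * (m : ℝ) + ν) = x ^ (κ * (2 * (m : ℝ) + ν)) :=
    (Real.rpow_mul hx.le κ _).symm
  have h3 : x ^ ((1 - α) / 2) * x ^ (κ * (2 * (m : ℝ) + ν)) = x ^ ((2 - α) * (m : ℝ)) := by
    rw [← Real.rpow_add hx]
    congr 1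
    rw [hκ, hν]
    field_simp
    ring
  have h4 : x ^ ((2 - α) * (m : ℝ)) = (x ^ (2 - α)) ^ m := by
    rw [Real.rpow_mul hx.le, Real.rpow_natCast]
  rw [h2, aC, ← h4, ← h3]
  ring

theorem stmt6 (α ν κ j : ℝ) (hα1 : 1 ≤ α) (hα2 : α < 2)
    (hν : ν = (α - 1) / (2 - α)) (hκ : κ = (2 - α) / 2)
    (hj : 0 < j) (hjz : besselJ ν j = 0)
    (Φ : ℝ → ℝ)
    (hΦ : ∀ x : ℝ, Φ x =
      if 0 < x then x ^ ((1 - α) / 2) * besselJ ν (j * x ^ κ) else 0) :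
    ∃ Φ' G G' : ℝ → ℝ,
      MemH1Strong α Φ Φ' ∧
      (∀ x ∈ Ioo (0 : ℝ) 1, G x = x ^ α * Φ' x) ∧
      (∀ x ∈ Ioc (-1 : ℝ) 0, G x = 0) ∧
      AbsContOnWith G G' (-1) 1 ∧
      IntegrableOn (fun x => (G' x) ^ 2) (Ioo (-1 : ℝ) 1) volume ∧
      Tendsto (fun x => x ^ α * Φ' x) (nhdsWithin 0 (Ioi 0)) (nhds 0) ∧
      (∀ᵐ x ∂(volume.restrict (Ioo (-1 : ℝ) 1)), -G' x = κ ^ 2 * j ^ 2 * Φ x) := by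
  have h2α : (0:ℝ) < 2 - α := by linarith
  have hν0 : 0 ≤ ν := by rw [hν]; apply div_nonneg <;> linarith
  have hΦpos : ∀ x : ℝ, 0 < x → Φ x = fB ν j (x ^ (2 - α)) := fun x hx => by
    rw [hΦ x, if_pos hx, besselJ_rep hα2 hν hκ hj hx]
  have hΦneg : ∀ x : ℝ, x ≤ 0 → Φ x = 0 := fun x hx => by
    rw [hΦ x, if_neg (not_lt.2 hx)]
  set Φ' : ℝ → ℝ := fun x => if 0 < x then
      f1B ν j (x ^ (2 - α)) * ((2 - α) * (x ^ (2 - α) / x)) else 0 with hΦ'def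
  set G : ℝ → ℝ := fun x => if 0 < x then (2 - α) * x * f1B ν j (x ^ (2 - α)) else 0 with hGdef
  set G' : ℝ → ℝ := fun x => -(κ ^ 2 * j ^ 2) * Φ x with hG'def
  have cf1B := continuous_f1B (ν := ν) (j := j) hν0 hj
  have cfB := continuous_fB (ν := ν) (j := j) hν0 hj
  have crpow : Continuous (fun x : ℝ => x ^ (2 - α)) :=
    Real.continuous_rpow_const (le_of_lt h2α)
  have cF : Continuous (fun y : ℝ => (2 - α) * y * f1B ν j (y ^ (2 - α))) :=
    (continuous_const.mul continuous_id).mul (cf1B.comp crpow)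
  -- derivative of Φ on (0, ∞)
  have hDΦ : ∀ x : ℝ, 0 < x → HasDerivAt Φ (Φ' x) x := by
    intro x hx
    have hchain := (hasDerivAt_fB hν0 hj (x ^ (2 - α))).comp x
      (Real.hasDerivAt_rpow_const (p := 2 - α) (Or.inl hx.ne'))
    rw [Real.rpow_sub hx (2 - α) 1, Real.rpow_one] at hchain
    have hval : Φ' x = f1B ν j (x ^ (2 - α)) * ((2 - α) * (x ^ (2 - α) / x)) := by
      rw [hΦ'def]; simp only [if_pos hx]
    have hchain' : HasDerivAt (fun y : ℝ => fB ν j (y ^ (2 - α))) (Φ' x) x := by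
      rw [hval]; exact hchain
    apply hchain'.congr_of_eventuallyEq
    filter_upwards [Ioi_mem_nhds hx] with y hy
    exact hΦpos y hy
  -- derivative of G on (0, ∞)
  have hDG : ∀ x : ℝ, 0 < x → HasDerivAt G (G' x) x := by
    intro x hx
    have hchain : HasDerivAt (fun y : ℝ => f1B ν j (y ^ (2 - α)))
        (f2B ν j (x ^ (2 - α)) * ((2 - α) * (x ^ (2 - α) / x))) x := by
      have h := (hasDerivAt_f1B hν0 hj (x ^ (2 - α))).comp x
        (Real.hasDerivAt_rpow_const (p := 2 - α) (Or.inl hx.ne'))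
      rw [Real.rpow_sub hx (2 - α) 1, Real.rpow_one] at h
      exact h
    have hlin : HasDerivAt (fun y : ℝ => (2 - α) * y) (2 - α) x := by
      simpa using (hasDerivAt_id x).const_mul (2 - α)
    have hmul := hlin.mul hchain
    have hxu : x * (x ^ (2 - α) / x) = x ^ (2 - α) := by field_simp
    have hG'val : (2 - α) * f1B ν j (x ^ (2 - α)) + (2 - α) * x *
        (f2B ν j (x ^ (2 - α)) * ((2 - α) * (x ^ (2 - α) / x))) = G' x := by
      rw [hG'def]; simp only
      rw [hΦpos x hx]
      have hk := keyODE hα1 hα2 hν hκ hj (x ^ (2 - α))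
      linear_combination hk + (2 - α) ^ 2 * f2B ν j (x ^ (2 - α)) * hxu
    have hGev : (fun y : ℝ => (2 - α) * y * f1B ν j (y ^ (2 - α))) =ᶠ[nhds x] G := by
      filter_upwards [Ioi_mem_nhds hx] with y hy
      rw [hGdef]; simp only [if_pos (mem_Ioi.1 hy)]
    have := hmul.congr_of_eventuallyEq hGev.symm
    rw [hG'val] at this
    exact this
  -- global measurability
  have hΦeq : Φ = fun x => if 0 < x then fB ν j (x ^ (2 - α)) else 0 := by
    funext x
    by_cases hx : 0 < x
    · rw [hΦpos x hx, if_pos hx]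
    · rw [hΦneg x (not_lt.1 hx), if_neg hx]
  have hmeasΦ : Measurable Φ := by
    rw [hΦeq]
    exact Measurable.ite measurableSet_Ioi ((cfB.comp crpow).measurable) measurable_const
  have hmeasΦ' : Measurable Φ' := by
    rw [hΦ'def]
    refine Measurable.ite measurableSet_Ioi ?_ measurable_const
    exact ((cf1B.comp crpow).measurable).mul
      (measurable_const.mul (crpow.measurable.div measurable_id))
  -- bounds
  obtain ⟨C0, hC0⟩ := isCompact_Icc.exists_bound_of_continuousOn
    (s := Icc (0:ℝ) 1) ((cfB.comp crpow).continuousOn)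
  obtain ⟨C1, hC1⟩ := isCompact_Icc.exists_bound_of_continuousOn
    (s := Icc (0:ℝ) 1) ((cf1B.comp crpow).continuousOn)
  have hbd : ∀ x ∈ Ioc (-1:ℝ) 1, |Φ x| ≤ max C0 0 := by
    intro x hx
    by_cases hx0 : 0 < x
    · rw [hΦpos x hx0]
      exact le_trans (hC0 x ⟨hx0.le, hx.2⟩) (le_max_left _ _)
    · rw [hΦneg x (not_lt.1 hx0)]; simp
  have hvol : volume (Ioo (-1:ℝ) 1) ≠ ⊤ := measure_Ioo_lt_top.ne
  have hvol' : volume (Ioc (-1:ℝ) 1) ≠ ⊤ := measure_Ioc_lt_top.ne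
  -- Φ integrable on Ioc (-1) 1
  have hΦint : IntegrableOn Φ (Ioc (-1:ℝ) 1) volume := by
    apply Measure.integrableOn_of_bounded hvol' hmeasΦ.aestronglyMeasurable (M := max C0 0)
    rw [ae_restrict_iff' measurableSet_Ioc]
    exact Eventually.of_forall fun x hx => hbd x hx
  -- Φ² integrable
  have hΦsq : IntegrableOn (fun x => (Φ x) ^ 2) (Ioo (-1:ℝ) 1) volume := by
    apply Measure.integrableOn_of_bounded hvol
      ((hmeasΦ.pow_const 2).aestronglyMeasurable) (M := (max C0 0) ^ 2)
    rw [ae_restrict_iff' measurableSet_Ioo]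
    refine Eventually.of_forall fun x hx => ?_
    rw [Real.norm_eq_abs, abs_pow]
    exact pow_le_pow_left₀ (abs_nonneg _) (hbd x (Ioo_subset_Ioc_self hx)) 2
  -- weight integrand
  have hwt : IntegrableOn (fun x => |x| ^ α * (Φ' x) ^ 2) (Ioo (-1:ℝ) 1) volume := by
    have hmeas : Measurable (fun x : ℝ => |x| ^ α * (Φ' x) ^ 2) :=
      (((Real.continuous_rpow_const (by linarith : (0:ℝ) ≤ α)).comp
        continuous_abs).measurable).mul (hmeasΦ'.pow_const 2)
    apply Measure.integrableOn_of_bounded hvol hmeas.aestronglyMeasurable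
      (M := (2 - α) ^ 2 * (max C1 0) ^ 2)
    rw [ae_restrict_iff' measurableSet_Ioo]
    refine Eventually.of_forall fun x hx => ?_
    by_cases hx0 : 0 < x
    · have hkey : |x| ^ α * (Φ' x) ^ 2
          = (2 - α) ^ 2 * x ^ (2 - α) * (f1B ν j (x ^ (2 - α))) ^ 2 := by
        rw [hΦ'def]; simp only [if_pos hx0]
        rw [abs_of_pos hx0]
        have e1 : x ^ (2 - α) / x = x ^ ((1:ℝ) - α) := by
          rw [show (1:ℝ) - α = 2 - α - 1 by ring, Real.rpow_sub hx0 (2 - α) 1,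
            Real.rpow_one]
        have e2 : (x ^ ((1:ℝ) - α)) ^ (2:ℕ) = x ^ (((1:ℝ) - α) * 2) := by
          rw [← Real.rpow_natCast (x ^ ((1:ℝ) - α)) 2, ← Real.rpow_mul hx0.le]
          norm_num
        have e3 : x ^ α * x ^ (((1:ℝ) - α) * 2) = x ^ (2 - α) := by
          rw [← Real.rpow_add hx0]; congr 1; ring
        have e4 : x ^ α * (x ^ ((1:ℝ) - α)) ^ (2:ℕ) = x ^ (2 - α) := by rw [e2]; exact e3
        rw [e1]
        linear_combination (2 - α) ^ 2 * f1B ν j (x ^ (2 - α)) ^ 2 * e4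
      rw [Real.norm_eq_abs, hkey]
      have hb1 : x ^ (2 - α) ≤ 1 := Real.rpow_le_one hx0.le hx.2.le h2α.le
      have hb0 : (0:ℝ) ≤ x ^ (2 - α) := Real.rpow_nonneg hx0.le _
      have hf1 : (f1B ν j (x ^ (2 - α))) ^ 2 ≤ (max C1 0) ^ 2 := by
        have := hC1 x ⟨hx0.le, hx.2.le⟩
        rw [Real.norm_eq_abs] at this
        calc (f1B ν j (x ^ (2 - α))) ^ 2 = |f1B ν j (x ^ (2 - α))| ^ 2 := (sq_abs _).symm
          _ ≤ (max C1 0) ^ 2 := pow_le_pow_left₀ (abs_nonneg _)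
              (le_trans this (le_max_left _ _)) 2
      rw [abs_of_nonneg (by positivity)]
      calc (2 - α) ^ 2 * x ^ (2 - α) * (f1B ν j (x ^ (2 - α))) ^ 2
          ≤ (2 - α) ^ 2 * 1 * (max C1 0) ^ 2 := by
            apply mul_le_mul
            · exact mul_le_mul_of_nonneg_left hb1 (by positivity)
            · exact hf1
            · positivity
            · positivity
        _ = (2 - α) ^ 2 * (max C1 0) ^ 2 := by ring
    · have : Φ' x = 0 := by rw [hΦ'def]; simp only [if_neg hx0]
      rw [this]
      have h00 : |x| ^ α * (0:ℝ) ^ 2 = 0 := by ring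
      rw [h00, norm_zero]
      positivity
  -- AbsContOnWith on the right
  have hright : ∀ c : ℝ, 0 < c → c ≤ 1 → AbsContOnWith Φ Φ' c 1 := by
    intro c hc hc1
    have hΦ'cont : ContinuousOn Φ' (Icc c 1) := by
      have hcont : ContinuousOn
          (fun x : ℝ => f1B ν j (x ^ (2 - α)) * ((2 - α) * (x ^ (2 - α) / x)))
          (Icc c 1) := by
        apply ContinuousOn.mul ((cf1B.comp crpow).continuousOn)
        apply ContinuousOn.mul continuousOn_const
        exact ContinuousOn.div (crpow.continuousOn) continuousOn_id
          (fun t ht => ne_of_gt (lt_of_lt_of_le hc ht.1))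
      apply hcont.congr
      intro t ht
      rw [hΦ'def]; simp only [if_pos (lt_of_lt_of_le hc ht.1)]
    have hii : IntervalIntegrable Φ' volume c 1 := by
      apply ContinuousOn.intervalIntegrable
      rwa [uIcc_of_le hc1]
    refine ⟨hii, fun x hx => ?_⟩
    have hfund : ∫ t in c..x, Φ' t = Φ x - Φ c := by
      apply intervalIntegral.integral_eq_sub_of_hasDerivAt
      · intro t ht
        rw [uIcc_of_le hx.1] at ht
        exact hDΦ t (lt_of_lt_of_le hc ht.1)
      · apply hii.mono_set
        rw [uIcc_of_le hx.1, uIcc_of_le hc1]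
        exact Icc_subset_Icc le_rfl hx.2
    rw [hfund]; ring
  -- AbsContOnWith on the left
  have hleft : ∀ c : ℝ, -1 ≤ c → c < 0 → AbsContOnWith Φ Φ' (-1) c := by
    intro c hc1 hc0
    have hzero : ∀ t ∈ Icc (-1:ℝ) c, Φ' t = 0 := by
      intro t ht
      rw [hΦ'def]
      simp only [if_neg (not_lt.2 (le_trans ht.2 hc0.le))]
    have hii : IntervalIntegrable Φ' volume (-1) c := by
      apply ContinuousOn.intervalIntegrable
      rw [uIcc_of_le hc1]
      exact continuousOn_const.congr hzero
    refine ⟨hii, fun x hx => ?_⟩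
    have hint0 : ∫ t in (-1:ℝ)..x, Φ' t = 0 := by
      rw [intervalIntegral.integral_congr (g := fun _ => 0)
        (fun t ht => by
          rw [uIcc_of_le hx.1] at ht
          exact hzero t ⟨ht.1, le_trans ht.2 hx.2⟩)]
      simp
    rw [hint0, hΦneg x (le_trans hx.2 hc0.le), hΦneg (-1) (by norm_num)]
    ring
  -- boundary values
  have hΦm1 : Φ (-1) = 0 := hΦneg (-1) (by norm_num)
  have hΦ1 : Φ 1 = 0 := by
    rw [hΦ 1, if_pos one_pos, Real.one_rpow, Real.one_rpow, mul_one, hjz, mul_zero]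
  -- G interval integrability of G'
  have hG'ii : IntervalIntegrable G' volume (-1) 1 := by
    rw [intervalIntegrable_iff_integrableOn_Ioc_of_le (by norm_num)]
    exact hΦint.const_mul _
  -- FTC for G
  have hG0 : G 0 = 0 := by rw [hGdef]; simp
  have hGm1 : G (-1) = 0 := by rw [hGdef]; norm_num
  have hzeroint : ∀ b : ℝ, -1 ≤ b → b ≤ 0 → ∫ t in (-1:ℝ)..b, G' t = 0 := by
    intro b hb1 hb0
    rw [intervalIntegral.integral_congr (g := fun _ => 0)
      (fun t ht => by
        rw [uIcc_of_le hb1] at ht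
        rw [hG'def]
        simp only
        rw [hΦneg t (le_trans ht.2 hb0), mul_zero])]
    simp
  have hGFTC : ∀ x ∈ Icc (-1:ℝ) 1, G x = G (-1) + ∫ t in (-1:ℝ)..x, G' t := by
    intro x hx
    by_cases hx0 : x ≤ 0
    · rw [hzeroint x hx.1 hx0, hGm1]
      rw [hGdef]; simp only [if_neg (not_lt.2 hx0)]; ring
    · push_neg at hx0
      have hii1 : IntervalIntegrable G' volume (-1) 0 := by
        apply hG'ii.mono_set
        rw [uIcc_of_le (by norm_num : (-1:ℝ) ≤ 0), uIcc_of_le (by norm_num : (-1:ℝ) ≤ 1)]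
        exact Icc_subset_Icc le_rfl (by norm_num)
      have hii2 : IntervalIntegrable G' volume 0 x := by
        apply hG'ii.mono_set
        rw [uIcc_of_le hx0.le, uIcc_of_le (by norm_num : (-1:ℝ) ≤ 1)]
        exact Icc_subset_Icc (by norm_num) hx.2
      rw [← intervalIntegral.integral_add_adjacent_intervals hii1 hii2]
      rw [hzeroint 0 (by norm_num) le_rfl]
      have hfund : ∫ t in (0:ℝ)..x, G' t = G x - G 0 := by
        apply intervalIntegral.integral_eq_sub_of_hasDeriv_right_of_le hx0.le
        · apply cF.continuousOn.congr
          intro y hy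
          rcases eq_or_lt_of_le hy.1 with h0 | h0
          · rw [hGdef]; simp only [← h0, if_neg (lt_irrefl (0:ℝ))]
            simp [Real.zero_rpow (ne_of_gt h2α)]
          · rw [hGdef]; simp only [if_pos h0]
        · intro t ht
          exact (hDG t ht.1).hasDerivWithinAt
        · exact hii2
      rw [hfund, hG0, hGm1]; ring
  -- G' squared integrable
  have hG'sq : IntegrableOn (fun x => (G' x) ^ 2) (Ioo (-1:ℝ) 1) volume := by
    have : (fun x => (G' x) ^ 2) = fun x => (κ ^ 2 * j ^ 2) ^ 2 * (Φ x) ^ 2 := by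
      funext x; rw [hG'def]; ring
    rw [this]
    exact hΦsq.const_mul _
  -- identity x^α Φ' x = G x on (0, ∞)
  have hGΦ' : ∀ x : ℝ, 0 < x → x ^ α * Φ' x = (2 - α) * x * f1B ν j (x ^ (2 - α)) := by
    intro x hx
    rw [hΦ'def]; simp only [if_pos hx]
    have e1 : x ^ α * (x ^ (2 - α) / x) = x := by
      have : x ^ (2 - α) / x = x ^ ((1:ℝ) - α) := by
        rw [show (1:ℝ) - α = 2 - α - 1 by ring, Real.rpow_sub hx (2 - α) 1,
          Real.rpow_one]
      rw [this, ← Real.rpow_add hx]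
      norm_num
    linear_combination (2 - α) * f1B ν j (x ^ (2 - α)) * e1
  -- the tendsto claim
  have htend : Tendsto (fun x => x ^ α * Φ' x) (nhdsWithin 0 (Ioi 0)) (nhds 0) := by
    have hF0 : Tendsto (fun y : ℝ => (2 - α) * y * f1B ν j (y ^ (2 - α))) (nhds 0) (nhds 0) := by
      have := cF.tendsto 0
      simpa using this
    apply Tendsto.congr' _ (hF0.mono_left nhdsWithin_le_nhds)
    filter_upwards [self_mem_nhdsWithin] with x hx
    exact (hGΦ' x hx).symm
  refine ⟨Φ', G, G', ⟨hΦsq, hright, hleft, hΦm1, hΦ1, hwt⟩, ?_, ?_, ⟨hG'ii, hGFTC⟩, hG'sq,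
    htend, ?_⟩
  · intro x hx
    rw [hGdef]; simp only [if_pos hx.1]
    exact (hGΦ' x hx.1).symm
  · intro x hx
    rw [hGdef]; simp only [if_neg (not_lt.2 hx.2)]
  · refine Eventually.of_forall fun x => ?_
    rw [hG'def]; ring
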